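/- Path consequence reduction: let 𝔠 be a class of abstract hybrid data models closed under the extracted-model construction (e.g., all models of frames satisfying pure frame conditions). For any set Λ ∪ {α} of path expressions: Λ ⊨¹_𝔠 α if and only if {@_i⟨β⟩j | β ∈ Λ} ⊨_𝔠 @_i⟨α⟩j, where i,j are nominals not occurring in Λ ∪ {α}. Here Λ ⊨¹_𝔠 α means: for every model M in 𝔠 and all points m,n, if M,m,n ⊨ β for all β ∈ Λ then M,m,n ⊨ α. -/

import Mathlib

mutual
inductive PExp (P N M E : Type) : Type
  | mod : M → PExp P N M E
  | at_ : N → PExp P N M E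
  | test : NExp P N M E → PExp P N M E
  | comp : PExp P N M E → PExp P N M E → PExp P N M E
inductive NExp (P N M E : Type) : Type
  | prop : P → NExp P N M E
  | nom : N → NExp P N M E
  | neg : NExp P N M E → NExp P N M E
  | conj : NExp P N M E → NExp P N M E → NExp P N M E
  | cmpEq : E → PExp P N M E → PExp P N M E → NExp P N M E
  | cmpNeq : E → PExp P N M E → PExp P N M E → NExp P N M E
end

/-- An abstract hybrid data model (the requirement that each `sim e` is an
equivalence relation is stated as a separate hypothesis where needed). -/
structure Model (P N M E : Type) where
  W : Type
  sim : E → W → W → Prop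
  R : M → W → W → Prop
  V : W → P → Prop
  nom : N → W

mutual
def psat {P N M E : Type} (𝔐 : Model P N M E) : PExp P N M E → 𝔐.W → 𝔐.W → Prop
  | .mod a, m, n => 𝔐.R a m n
  | .at_ i, _, n => 𝔐.nom i = n
  | .test φ, m, n => m = n ∧ nsat 𝔐 φ m
  | .comp α β, m, n => ∃ l, psat 𝔐 α m l ∧ psat 𝔐 β l n
def nsat {P N M E : Type} (𝔐 : Model P N M E) : NExp P N M E → 𝔐.W → Prop
  | .prop p, m => 𝔐.V m p
  | .nom i, m => 𝔐.nom i = m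
  | .neg φ, m => ¬ nsat 𝔐 φ m
  | .conj φ ψ, m => nsat 𝔐 φ m ∧ nsat 𝔐 ψ m
  | .cmpEq e α β, m => ∃ n l, psat 𝔐 α m n ∧ psat 𝔐 β m l ∧ 𝔐.sim e n l
  | .cmpNeq e α β, m => ∃ n l, psat 𝔐 α m n ∧ psat 𝔐 β m l ∧ ¬ 𝔐.sim e n l
end

variable {P N M E : Type}

/-- `⊤` defined from a given node expression: `¬(φ ∧ ¬φ)`. -/
def NExp.top (φ : NExp P N M E) : NExp P N M E := .neg (.conj φ (.neg φ))
/-- `ε := [⊤]`. -/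
def PExp.eps (φ : NExp P N M E) : PExp P N M E := .test (NExp.top φ)
/-- `⟨α⟩φ := ⟨α[φ] =_e α[φ]⟩`. -/
def NExp.dia (e : E) (α : PExp P N M E) (φ : NExp P N M E) : NExp P N M E :=
  .cmpEq e (α.comp (.test φ)) (α.comp (.test φ))
/-- `[α]φ := ¬⟨α⟩¬φ`. -/
def NExp.box (e : E) (α : PExp P N M E) (φ : NExp P N M E) : NExp P N M E :=
  .neg (NExp.dia e α (.neg φ))
/-- `@_i φ := ⟨@_i⟩φ`. -/
def NExp.atf (e : E) (i : N) (φ : NExp P N M E) : NExp P N M E := NExp.dia e (.at_ i) φ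
def NExp.impl (φ ψ : NExp P N M E) : NExp P N M E := .neg (.conj φ (.neg ψ))
def NExp.iffN (φ ψ : NExp P N M E) : NExp P N M E := .conj (φ.impl ψ) (ψ.impl φ)

mutual
/-- Nominals occurring in a path expression. -/
def pnoms {P N M E : Type} : PExp P N M E → List N
  | .mod _ => []
  | .at_ i => [i]
  | .test φ => nnoms φ
  | .comp α β => pnoms α ++ pnoms β
/-- Nominals occurring in a node expression. -/
def nnoms {P N M E : Type} : NExp P N M E → List N
  | .prop _ => []
  | .nom i => [i]
  | .neg φ => nnoms φ
  | .conj φ ψ => nnoms φ ++ nnoms ψ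
  | .cmpEq _ α β => pnoms α ++ pnoms β
  | .cmpNeq _ α β => pnoms α ++ pnoms β
end


/-- `@_i⟨α⟩j` as a node expression. -/
def pathNode (e₀ : E) (i : N) (α : PExp P N M E) (j : N) : NExp P N M E :=
  NExp.dia e₀ ((PExp.at_ i).comp α) (.nom j)

mutual
theorem psat_congr (𝔐 : Model P N M E) (nom' : N → 𝔐.W) :
    ∀ (β : PExp P N M E), (∀ k ∈ pnoms β, 𝔐.nom k = nom' k) → ∀ m n : 𝔐.W,
      (psat 𝔐 β m n ↔ psat ⟨𝔐.W, 𝔐.sim, 𝔐.R, 𝔐.V, nom'⟩ β m n)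
  | .mod a, _, m, n => Iff.rfl
  | .at_ k, h, m, n => by
      simp only [psat]; rw [h k (by simp [pnoms])]
  | .test φ, h, m, n => by
      simp only [psat]
      rw [nsat_congr 𝔐 nom' φ (by simpa [pnoms] using h) m]
  | .comp β γ, h, m, n => by
      simp only [psat]
      constructor <;> rintro ⟨l, h1, h2⟩ <;> refine ⟨l, ?_, ?_⟩
      · exact (psat_congr 𝔐 nom' β (fun k hk => h k (by simp [pnoms, hk])) m l).1 h1
      · exact (psat_congr 𝔐 nom' γ (fun k hk => h k (by simp [pnoms, hk])) l n).1 h2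
      · exact (psat_congr 𝔐 nom' β (fun k hk => h k (by simp [pnoms, hk])) m l).2 h1
      · exact (psat_congr 𝔐 nom' γ (fun k hk => h k (by simp [pnoms, hk])) l n).2 h2
theorem nsat_congr (𝔐 : Model P N M E) (nom' : N → 𝔐.W) :
    ∀ (φ : NExp P N M E), (∀ k ∈ nnoms φ, 𝔐.nom k = nom' k) → ∀ m : 𝔐.W,
      (nsat 𝔐 φ m ↔ nsat ⟨𝔐.W, 𝔐.sim, 𝔐.R, 𝔐.V, nom'⟩ φ m)
  | .prop p, _, m => Iff.rfl
  | .nom k, h, m => by simp only [nsat]; rw [h k (by simp [nnoms])]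
  | .neg φ, h, m => by
      simp only [nsat]; rw [nsat_congr 𝔐 nom' φ (by simpa [nnoms] using h) m]
  | .conj φ ψ, h, m => by
      simp only [nsat]
      rw [nsat_congr 𝔐 nom' φ (fun k hk => h k (by simp [nnoms, hk])) m,
        nsat_congr 𝔐 nom' ψ (fun k hk => h k (by simp [nnoms, hk])) m]
  | .cmpEq e β γ, h, m => by
      simp only [nsat]
      constructor <;> rintro ⟨x, y, h1, h2, h3⟩ <;> refine ⟨x, y, ?_, ?_, h3⟩
      · exact (psat_congr 𝔐 nom' β (fun k hk => h k (by simp [nnoms, hk])) m x).1 h1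
      · exact (psat_congr 𝔐 nom' γ (fun k hk => h k (by simp [nnoms, hk])) m y).1 h2
      · exact (psat_congr 𝔐 nom' β (fun k hk => h k (by simp [nnoms, hk])) m x).2 h1
      · exact (psat_congr 𝔐 nom' γ (fun k hk => h k (by simp [nnoms, hk])) m y).2 h2
  | .cmpNeq e β γ, h, m => by
      simp only [nsat]
      constructor <;> rintro ⟨x, y, h1, h2, h3⟩ <;> refine ⟨x, y, ?_, ?_, h3⟩
      · exact (psat_congr 𝔐 nom' β (fun k hk => h k (by simp [nnoms, hk])) m x).1 h1
      · exact (psat_congr 𝔐 nom' γ (fun k hk => h k (by simp [nnoms, hk])) m y).1 h2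
      · exact (psat_congr 𝔐 nom' β (fun k hk => h k (by simp [nnoms, hk])) m x).2 h1
      · exact (psat_congr 𝔐 nom' γ (fun k hk => h k (by simp [nnoms, hk])) m y).2 h2
end

theorem pathNode_iff (𝔐 : Model P N M E) (e₀ : E) (hrefl : ∀ w, 𝔐.sim e₀ w w)
    (i j : N) (α : PExp P N M E) (m : 𝔐.W) :
    nsat 𝔐 (pathNode e₀ i α j) m ↔ psat 𝔐 α (𝔐.nom i) (𝔐.nom j) := by
  simp only [pathNode, NExp.dia, nsat, psat]
  constructor
  · rintro ⟨n, l, ⟨x, ⟨y, rfl, hy⟩, z, rfl, rfl⟩, -⟩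
    exact hy
  · intro h
    exact ⟨𝔐.nom j, 𝔐.nom j,
      ⟨𝔐.nom j, ⟨𝔐.nom i, rfl, h⟩, rfl, rfl⟩,
      ⟨𝔐.nom j, ⟨𝔐.nom i, rfl, h⟩, rfl, rfl⟩, hrefl _⟩

/-- Reduction of path consequence to node consequence: for a class `C` of
abstract hybrid data models closed under change of valuation and nominal
assignment (e.g. the class of all models of a class of frames), and fresh
nominals `i ≠ j`, we have `Λ ⊨¹_C α` iff
`{@_i⟨β⟩j | β ∈ Λ} ⊨_C @_i⟨α⟩j`. -/
theorem path_consequence_reduction (C : Model P N M E → Prop)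
    (hC_eq : ∀ 𝔐, C 𝔐 → ∀ e, Equivalence (𝔐.sim e))
    (hC_closed : ∀ 𝔐, C 𝔐 → ∀ (V' : 𝔐.W → P → Prop) (nom' : N → 𝔐.W),
      C ⟨𝔐.W, 𝔐.sim, 𝔐.R, V', nom'⟩)
    (e₀ : E) (Λ : Set (PExp P N M E)) (α : PExp P N M E) (i j : N) (hij : i ≠ j)
    (hi : i ∉ pnoms α ∧ ∀ β ∈ Λ, i ∉ pnoms β)
    (hj : j ∉ pnoms α ∧ ∀ β ∈ Λ, j ∉ pnoms β) :
    (∀ 𝔐, C 𝔐 → ∀ m n : 𝔐.W, (∀ β ∈ Λ, psat 𝔐 β m n) → psat 𝔐 α m n) ↔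
    (∀ 𝔐, C 𝔐 → ∀ m : 𝔐.W,
      (∀ β ∈ Λ, nsat 𝔐 (pathNode e₀ i β j) m) → nsat 𝔐 (pathNode e₀ i α j) m) := by
  classical
  constructor
  · intro H 𝔐 h𝔐 m hprem
    have hrefl : ∀ w, 𝔐.sim e₀ w w := (hC_eq 𝔐 h𝔐 e₀).refl
    rw [pathNode_iff 𝔐 e₀ hrefl]
    apply H 𝔐 h𝔐
    intro β hβ
    exact (pathNode_iff 𝔐 e₀ hrefl i j β m).1 (hprem β hβ)
  · intro H 𝔐 h𝔐 m n hprem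
    set nom' : N → 𝔐.W := fun k => if k = i then m else if k = j then n else 𝔐.nom k
      with hnom'
    set 𝔐' : Model P N M E := ⟨𝔐.W, 𝔐.sim, 𝔐.R, 𝔐.V, nom'⟩ with h𝔐'
    have h𝔐'C : C 𝔐' := hC_closed 𝔐 h𝔐 𝔐.V nom'
    have hrefl : ∀ w, 𝔐'.sim e₀ w w := (hC_eq 𝔐' h𝔐'C e₀).refl
    have hni : 𝔐'.nom i = m := by exact if_pos rfl
    have hnj : 𝔐'.nom j = n := by exact (if_neg hij.symm).trans (if_pos rfl)
    have key : ∀ (β : PExp P N M E), i ∉ pnoms β → j ∉ pnoms β →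
        ∀ m' n' : 𝔐.W, (psat 𝔐 β m' n' ↔ psat 𝔐' β m' n') := by
      intro β hiβ hjβ m' n'
      refine psat_congr 𝔐 nom' β ?_ m' n'
      intro k hk
      simp only [hnom']
      rw [if_neg (fun h : k = i => hiβ (h ▸ hk)), if_neg (fun h : k = j => hjβ (h ▸ hk))]
    have := H 𝔐' h𝔐'C m (fun β hβ =>
      (pathNode_iff 𝔐' e₀ hrefl i j β m).2 (by
        rw [hni, hnj]
        exact (key β (hi.2 β hβ) (hj.2 β hβ) m n).1 (hprem β hβ)))
    rw [pathNode_iff 𝔐' e₀ hrefl, hni, hnj] at this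
    exact (key α hi.1 hj.1 m n).2 this
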